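/- There is a well-defined group homomorphism from F_n to (Z/2)^{(n choose 2)} (indexed by unordered pairs {a,b} ⊂ {1,...,n}) sending each generator τ_i to 0 and each ζ_i, occurring at a given position in a word, to the indicator of the pair of strands crossing at that position. Concretely: the map counting, for each word w in the generators and each unordered pair {a,b}, the parity of the number of ζ-letters at which strands a and b cross (strand labels traced via the permutation action where both ζ_i and τ_i act as the transposition (i,i+1)), descends to a well-defined function on F_n. -/

import Mathlib

set_option maxHeartbeats 1000000

namespace OneTermBracket

/-- Letters (generators) of free braid words on `n` strands:
`zeta i` is a classical crossing, `tau i` a virtual crossing, `1 ≤ i+1 ≤ n-1`. -/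
inductive Letter (n : ℕ) where
  | zeta (i : Fin (n-1))
  | tau  (i : Fin (n-1))
deriving DecidableEq

namespace Letter

def idx {n : ℕ} : Letter n → Fin (n-1)
  | zeta i => i
  | tau i => i

def isZeta {n : ℕ} : Letter n → Bool
  | zeta _ => true
  | tau _ => false

end Letter

def lo {n : ℕ} (i : Fin (n-1)) : Fin n := ⟨i.1, by have := i.2; omega⟩
def hi {n : ℕ} (i : Fin (n-1)) : Fin n := ⟨i.1 + 1, by have := i.2; omega⟩

/-- The transposition `(i, i+1)` of `{1, …, n}`. -/
def sPerm {n : ℕ} (i : Fin (n-1)) : Equiv.Perm (Fin n) := Equiv.swap (lo i) (hi i)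

/-- Each letter acts on positions as the transposition `(i, i+1)`. -/
def transOf {n : ℕ} (g : Letter n) : Equiv.Perm (Fin n) := sPerm g.idx

/-- The permutation realized by the prefix of length `j` of a braid word,
mapping the top label of a strand to its position at level `j`. -/
def prefPerm {n : ℕ} (w : List (Letter n)) (j : ℕ) : Equiv.Perm (Fin n) :=
  (((w.take j).map transOf).reverse).prod

/-- The permutation `P(β)` of a braid word (top endpoint `k` goes to bottom endpoint `P k`). -/
def permOf {n : ℕ} (w : List (Letter n)) : Equiv.Perm (Fin n) :=
  ((w.map transOf).reverse).prod

/-- The unordered pair of (top labels of the) strands crossing at position `j` of `w`. -/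
def strandsAt {n : ℕ} (w : List (Letter n)) (j : ℕ) : Option (Sym2 (Fin n)) :=
  (w[j]?).map fun g => s((prefPerm w j)⁻¹ (lo g.idx), (prefPerm w j)⁻¹ (hi g.idx))

/-- Component-wise parity determined by a partition `{1,…,n} = N₁ ⊔ N₂` (encoded by
`c : Fin n → Bool`): a classical crossing is odd (`1`) iff its two strands lie in
different parts. Non-classical positions get `0`. -/
def cwParity {n : ℕ} (c : Fin n → Bool) (w : List (Letter n)) (j : ℕ) : ZMod 2 :=
  match w[j]? with
  | some (.zeta i) =>
      if c ((prefPerm w j)⁻¹ (lo i)) = c ((prefPerm w j)⁻¹ (hi i)) then 0 else 1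
  | _ => 0

/-- The defining relations of `F_n` and `FB_n` which do not involve
`ζ_i² = 1` or the classical third Reidemeister move ("strong" moves). -/
inductive RelStrong (n : ℕ) : List (Letter n) → List (Letter n) → Prop
  | tt (i : Fin (n-1)) : RelStrong n [.tau i, .tau i] []
  | virt (i : Fin (n-1)) : RelStrong n [.zeta i, .tau i] [.tau i, .zeta i]
  | far_zz (i j : Fin (n-1)) (h : 2 ≤ Nat.dist i j) :
      RelStrong n [.zeta i, .zeta j] [.zeta j, .zeta i]
  | far_zt (i j : Fin (n-1)) (h : 2 ≤ Nat.dist i j) :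
      RelStrong n [.zeta i, .tau j] [.tau j, .zeta i]
  | far_tt (i j : Fin (n-1)) (h : 2 ≤ Nat.dist i j) :
      RelStrong n [.tau i, .tau j] [.tau j, .tau i]
  | r3v (i j : Fin (n-1)) (h : (j:ℕ) = (i:ℕ) + 1) :
      RelStrong n [.tau i, .tau j, .tau i] [.tau j, .tau i, .tau j]
  | semi (i j : Fin (n-1)) (h : (j:ℕ) = (i:ℕ) + 1) :
      RelStrong n [.tau i, .tau j, .zeta i] [.zeta j, .tau i, .tau j]

/-- The defining relations of `F_n`. -/
inductive RelF (n : ℕ) : List (Letter n) → List (Letter n) → Prop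
  | strong {r1 r2} : RelStrong n r1 r2 → RelF n r1 r2
  | zz (i : Fin (n-1)) : RelF n [.zeta i, .zeta i] []

/-- The defining relations of the free braid group `FB_n`. -/
inductive RelFB (n : ℕ) : List (Letter n) → List (Letter n) → Prop
  | ofF {r1 r2} : RelF n r1 r2 → RelFB n r1 r2
  | r3c (i j : Fin (n-1)) (h : (j:ℕ) = (i:ℕ) + 1) :
      RelFB n [.zeta i, .zeta j, .zeta i] [.zeta j, .zeta i, .zeta j]

/-- One application of a relation from `R` inside a word. -/
def StepOf {n : ℕ} (R : List (Letter n) → List (Letter n) → Prop)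
    (w1 w2 : List (Letter n)) : Prop :=
  ∃ A B r1 r2, R r1 r2 ∧ w1 = A ++ r1 ++ B ∧ w2 = A ++ r2 ++ B

/-- Strong equivalence: all moves of `F_n` except `ζ_i² = 1`. -/
def StrongEq {n : ℕ} (w1 w2 : List (Letter n)) : Prop :=
  Relation.EqvGen (StepOf (RelStrong n)) w1 w2

/-- Equivalence of braid words as elements of `F_n`. -/
def EqF {n : ℕ} (w1 w2 : List (Letter n)) : Prop :=
  Relation.EqvGen (StepOf (RelF n)) w1 w2

/-- Equivalence of braid words as elements of the free braid group `FB_n`. -/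
def EqFB {n : ℕ} (w1 w2 : List (Letter n)) : Prop :=
  Relation.EqvGen (StepOf (RelFB n)) w1 w2

/-- The parity axioms, for a parity `P` defined on the class `C` of braid words.
`P w j` is the parity of the crossing at position `j` of `w` (only classical
positions matter). -/
structure IsParity {n : ℕ} (C : List (Letter n) → Prop)
    (P : List (Letter n) → ℕ → ZMod 2) : Prop where
  /-- Crossings not taking part in a relation keep their parity (part before). -/
  untouched_left : ∀ A B r1 r2, RelFB n r1 r2 →
    C (A ++ r1 ++ B) → C (A ++ r2 ++ B) → ∀ j < A.length,
    P (A ++ r1 ++ B) j = P (A ++ r2 ++ B) j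
  /-- Crossings not taking part in a relation keep their parity (part after). -/
  untouched_right : ∀ A B r1 r2, RelFB n r1 r2 →
    C (A ++ r1 ++ B) → C (A ++ r2 ++ B) → ∀ j < B.length,
    P (A ++ r1 ++ B) (A.length + r1.length + j) = P (A ++ r2 ++ B) (A.length + r2.length + j)
  /-- In commutation-type relations (far commutativity, virtualization), the two
  letters keep their parities. -/
  comm : ∀ A B x y, RelFB n [x, y] [y, x] →
    C (A ++ [x, y] ++ B) → C (A ++ [y, x] ++ B) →
    P (A ++ [x, y] ++ B) A.length = P (A ++ [y, x] ++ B) (A.length + 1) ∧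
    P (A ++ [x, y] ++ B) (A.length + 1) = P (A ++ [y, x] ++ B) A.length
  /-- In a classical second Reidemeister move both crossings have the same parity. -/
  r2c : ∀ A B (i : Fin (n-1)),
    C (A ++ [.zeta i, .zeta i] ++ B) → C (A ++ B) →
    P (A ++ [.zeta i, .zeta i] ++ B) A.length
      = P (A ++ [.zeta i, .zeta i] ++ B) (A.length + 1)
  /-- In a semivirtual move, the classical crossing keeps its parity. -/
  semiv : ∀ A B (i j : Fin (n-1)), (j:ℕ) = (i:ℕ) + 1 →
    C (A ++ [.tau i, .tau j, .zeta i] ++ B) →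
    C (A ++ [.zeta j, .tau i, .tau j] ++ B) →
    P (A ++ [.tau i, .tau j, .zeta i] ++ B) (A.length + 2)
      = P (A ++ [.zeta j, .tau i, .tau j] ++ B) A.length
  /-- In a classical third Reidemeister move the number of odd crossings is even. -/
  r3_even : ∀ A B (i j : Fin (n-1)), (j:ℕ) = (i:ℕ) + 1 →
    C (A ++ [.zeta i, .zeta j, .zeta i] ++ B) →
    C (A ++ [.zeta j, .zeta i, .zeta j] ++ B) →
    P (A ++ [.zeta i, .zeta j, .zeta i] ++ B) A.length
      + P (A ++ [.zeta i, .zeta j, .zeta i] ++ B) (A.length + 1)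
      + P (A ++ [.zeta i, .zeta j, .zeta i] ++ B) (A.length + 2) = 0
  /-- In a classical third Reidemeister move, upper/middle/lower crossings on the
  left correspond to lower/middle/upper crossings on the right with equal parities. -/
  r3_corr : ∀ A B (i j : Fin (n-1)), (j:ℕ) = (i:ℕ) + 1 →
    C (A ++ [.zeta i, .zeta j, .zeta i] ++ B) →
    C (A ++ [.zeta j, .zeta i, .zeta j] ++ B) →
    P (A ++ [.zeta i, .zeta j, .zeta i] ++ B) A.length
      = P (A ++ [.zeta j, .zeta i, .zeta j] ++ B) (A.length + 2) ∧
    P (A ++ [.zeta i, .zeta j, .zeta i] ++ B) (A.length + 1)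
      = P (A ++ [.zeta j, .zeta i, .zeta j] ++ B) (A.length + 1) ∧
    P (A ++ [.zeta i, .zeta j, .zeta i] ++ B) (A.length + 2)
      = P (A ++ [.zeta j, .zeta i, .zeta j] ++ B) A.length

/-- Delete from `w` all classical letters whose parity (given by `par`) is even. -/
def deleteEven {n : ℕ} (w : List (Letter n)) (par : ℕ → ZMod 2) : List (Letter n) :=
  (List.range w.length).filterMap fun j =>
    (w[j]?).bind fun g =>
      match g with
      | .zeta i => if par j = 0 then none else some (.zeta i)
      | .tau i => some (.tau i)

/-- The one-term parity bracket: delete all even classical crossings. -/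
def bracket {n : ℕ} (P : List (Letter n) → ℕ → ZMod 2) (w : List (Letter n)) :
    List (Letter n) :=
  deleteEven w (P w)

/-- Positions of classical crossings of a word. -/
def ZetaPos {n : ℕ} (w : List (Letter n)) : Set ℕ :=
  {j | ∃ i, w[j]? = some (Letter.zeta i)}

/-- The classical crossings at positions `j1 < j2` form a bigon: they lie on the same
pair of strands, and no classical crossing between them lies on either of those strands. -/
def IsBigon {n : ℕ} (w : List (Letter n)) (j1 j2 : ℕ) : Prop :=
  j1 < j2 ∧ j1 ∈ ZetaPos w ∧ j2 ∈ ZetaPos w ∧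
  strandsAt w j1 = strandsAt w j2 ∧
  ∀ k, j1 < k → k < j2 → k ∈ ZetaPos w →
    ∀ e e', strandsAt w j1 = some e → strandsAt w k = some e' → ∀ a ∈ e, a ∉ e'

/-- Delete the letters at two given positions. -/
def delete2 {n : ℕ} (w : List (Letter n)) (j1 j2 : ℕ) : List (Letter n) :=
  (w.eraseIdx (max j1 j2)).eraseIdx (min j1 j2)

/-- One bigon reduction. -/
def BigonStep {n : ℕ} (w w' : List (Letter n)) : Prop :=
  ∃ j1 j2, IsBigon w j1 j2 ∧ w' = delete2 w j1 j2

/-- A word is irreducible if it admits no bigon reduction. -/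
def Irreducible {n : ℕ} (w : List (Letter n)) : Prop := ¬ ∃ j1 j2, IsBigon w j1 j2

/-- Number of classical letters of a word. -/
def countZeta {n : ℕ} (w : List (Letter n)) : ℕ := (w.filter Letter.isZeta).length

/-- `φ` is an isomorphism of the decorated graphs `Γ(w1) ≅ Γ(w2)`, encoded
combinatorially: a bijection of classical crossings preserving the pair of strands
through each crossing, the order of crossings along each strand, and the endpoint
structure (the permutation). -/
structure IsGammaIso {n : ℕ} (w1 w2 : List (Letter n)) (φ : ℕ → ℕ) : Prop where
  maps : ∀ j ∈ ZetaPos w1, φ j ∈ ZetaPos w2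
  inj : ∀ j ∈ ZetaPos w1, ∀ j' ∈ ZetaPos w1, φ j = φ j' → j = j'
  surj : ∀ k ∈ ZetaPos w2, ∃ j ∈ ZetaPos w1, φ j = k
  strands : ∀ j ∈ ZetaPos w1, strandsAt w2 (φ j) = strandsAt w1 j
  order : ∀ j ∈ ZetaPos w1, ∀ j' ∈ ZetaPos w1, j < j' →
    (∃ e e' a, strandsAt w1 j = some e ∧ strandsAt w1 j' = some e' ∧ a ∈ e ∧ a ∈ e') →
    φ j < φ j'
  perm : permOf w1 = permOf w2

/-! ### The groups `F_n` and `FB_n` as presented groups -/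

/-- Generators: `Sum.inl i` is the classical generator `ζ_i`,
`Sum.inr i` is the virtual generator `τ_i`. -/
abbrev GGen (n : ℕ) := Fin (n-1) ⊕ Fin (n-1)

def zg {n : ℕ} (i : Fin (n-1)) : FreeGroup (GGen n) := FreeGroup.of (Sum.inl i)
def tg {n : ℕ} (i : Fin (n-1)) : FreeGroup (GGen n) := FreeGroup.of (Sum.inr i)

/-- The relators of `F_n`. -/
def FRels (n : ℕ) : Set (FreeGroup (GGen n)) :=
  (⋃ i, {zg i * zg i}) ∪ (⋃ i, {tg i * tg i}) ∪
  (⋃ i, {zg i * tg i * (tg i * zg i)⁻¹}) ∪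
  (⋃ (i : Fin (n-1)) (j : Fin (n-1)) (_ : 2 ≤ Nat.dist i j),
    {zg i * zg j * (zg j * zg i)⁻¹, zg i * tg j * (tg j * zg i)⁻¹,
     tg i * tg j * (tg j * tg i)⁻¹}) ∪
  (⋃ (i : Fin (n-1)) (j : Fin (n-1)) (_ : (j:ℕ) = (i:ℕ) + 1),
    {tg i * tg j * tg i * (tg j * tg i * tg j)⁻¹,
     tg i * tg j * zg i * (zg j * tg i * tg j)⁻¹})

/-- The relators of `FB_n`: those of `F_n` together with the classical third
Reidemeister relation. -/
def FBRels (n : ℕ) : Set (FreeGroup (GGen n)) :=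
  FRels n ∪
  (⋃ (i : Fin (n-1)) (j : Fin (n-1)) (_ : (j:ℕ) = (i:ℕ) + 1),
    {zg i * zg j * zg i * (zg j * zg i * zg j)⁻¹})

/-- The group `F_n`. -/
abbrev FGrp (n : ℕ) := PresentedGroup (FRels n)

/-- The free braid group `FB_n`. -/
abbrev FBGrp (n : ℕ) := PresentedGroup (FBRels n)

def zF {n : ℕ} (i : Fin (n-1)) : FGrp n := PresentedGroup.of (Sum.inl i)
def tF {n : ℕ} (i : Fin (n-1)) : FGrp n := PresentedGroup.of (Sum.inr i)

/-- Evaluation of a braid word in `F_n`. -/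
def evalF {n : ℕ} (w : List (Letter n)) : FGrp n :=
  (w.map fun g => match g with
    | Letter.zeta i => zF i
    | Letter.tau i => tF i).prod

/-- For each unordered pair of strands, the mod-2 number of classical letters of `w`
at which these two strands cross (strand labels traced from the top). -/
def crossPar {n : ℕ} : List (Letter n) → Sym2 (Fin n) → ZMod 2
  | [], _ => 0
  | g :: rest, e =>
    (match g with
     | Letter.zeta i => if e = s(lo i, hi i) then (1 : ZMod 2) else 0
     | Letter.tau _ => 0) + crossPar rest (e.map (transOf g))

/-! ### Chord diagrams and the Gaussian parity -/

/-- The setoid on strands given by `SameCycle`; its classes are the orbits of `σ`,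
i.e. the components of the closure. -/
def sameCycleSetoid {n : ℕ} (σ : Equiv.Perm (Fin n)) : Setoid (Fin n) :=
  ⟨σ.SameCycle, ⟨Equiv.Perm.SameCycle.refl σ, Equiv.Perm.SameCycle.symm,
    Equiv.Perm.SameCycle.trans⟩⟩

/-- The rank of a strand in the single cycle of `σ` starting from strand `0`. -/
noncomputable def rankIn {n : ℕ} [NeZero n] (σ : Equiv.Perm (Fin n)) (a : Fin n) : ℕ :=
  ((Function.invFun (fun k : Fin n => (σ ^ (k : ℕ)) 0) a : Fin n) : ℕ)

/-- Coordinates on the core circle of the two endpoints of the chord of the classical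
crossing at position `j` (the circle traverses the strands in the cyclic order of `σ`). -/
noncomputable def chordEnds {n : ℕ} [NeZero n] (w : List (Letter n))
    (σ : Equiv.Perm (Fin n)) (j : ℕ) : ℕ × ℕ :=
  match w[j]? with
  | some (Letter.zeta i) =>
      (rankIn σ ((prefPerm w j)⁻¹ (lo i)) * w.length + j,
       rankIn σ ((prefPerm w j)⁻¹ (hi i)) * w.length + j)
  | _ => (0, 0)

/-- Two chords are linked iff the endpoints of one separate the endpoints of the
other on the core circle. -/
def LinkedChords {n : ℕ} [NeZero n] (w : List (Letter n)) (σ : Equiv.Perm (Fin n))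
    (j k : ℕ) : Prop :=
  Xor' (min (chordEnds w σ j).1 (chordEnds w σ j).2 < (chordEnds w σ k).1 ∧
        (chordEnds w σ k).1 < max (chordEnds w σ j).1 (chordEnds w σ j).2)
       (min (chordEnds w σ j).1 (chordEnds w σ j).2 < (chordEnds w σ k).2 ∧
        (chordEnds w σ k).2 < max (chordEnds w σ j).1 (chordEnds w σ j).2)

/-- The Gaussian parity of the classical crossing at position `j`: the mod-2 number
of chords linked with its chord. Even (`0`) iff linked with evenly many chords. -/
noncomputable def gaussParity {n : ℕ} [NeZero n] (w : List (Letter n))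
    (σ : Equiv.Perm (Fin n)) (j : ℕ) : ZMod 2 :=
  (Nat.card {k : ℕ // k < w.length ∧ k ∈ ZetaPos w ∧ k ≠ j ∧ LinkedChords w σ j k} : ZMod 2)


/-! ### Auxiliary: the target group for the crossing-parity homomorphism -/

/-- Semidirect-product-style group: a permutation together with a
`ZMod 2`-valued function on unordered pairs of strands. -/
@[ext] structure Gp (n : ℕ) where
  p : Equiv.Perm (Fin n)
  f : Sym2 (Fin n) → ZMod 2

namespace Gp

variable {n : ℕ}

instance : Group (Gp n) where
  mul a b := ⟨b.p * a.p, fun e => a.f e + b.f (e.map a.p)⟩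
  one := ⟨1, fun _ => 0⟩
  inv a := ⟨a.p⁻¹, fun e => a.f (e.map ⇑(a.p⁻¹))⟩
  mul_assoc a b c := by
    refine Gp.ext (mul_assoc c.p b.p a.p).symm ?_
    funext e
    show (a.f e + b.f (e.map a.p)) + c.f (e.map ⇑(b.p * a.p))
        = a.f e + (b.f (e.map a.p) + c.f ((e.map a.p).map b.p))
    rw [add_assoc, Sym2.map_map, Equiv.Perm.coe_mul]
  one_mul a := by
    refine Gp.ext (mul_one a.p) ?_
    funext e
    show (0 : ZMod 2) + a.f (e.map ⇑(1 : Equiv.Perm (Fin n))) = a.f e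
    simp
  mul_one a := by
    refine Gp.ext (one_mul a.p) ?_
    funext e
    show a.f e + 0 = a.f e
    simp
  inv_mul_cancel a := by
    refine Gp.ext (mul_inv_cancel a.p) ?_
    funext e
    show a.f (e.map ⇑(a.p⁻¹)) + a.f (e.map ⇑(a.p⁻¹)) = 0
    exact CharTwo.add_self_eq_zero _

@[simp] lemma mul_p (a b : Gp n) : (a * b).p = b.p * a.p := rfl
@[simp] lemma mul_f (a b : Gp n) (e : Sym2 (Fin n)) :
    (a * b).f e = a.f e + b.f (e.map a.p) := rfl
@[simp] lemma one_p : (1 : Gp n).p = 1 := rfl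
@[simp] lemma one_f (e : Sym2 (Fin n)) : (1 : Gp n).f e = 0 := rfl
@[simp] lemma mk_p (p : Equiv.Perm (Fin n)) (f : Sym2 (Fin n) → ZMod 2) :
    (Gp.mk p f).p = p := rfl
@[simp] lemma mk_f (p : Equiv.Perm (Fin n)) (f : Sym2 (Fin n) → ZMod 2) (e) :
    (Gp.mk p f).f e = f e := rfl

end Gp

/-- Indicator of the pair `{i, i+1}`. -/
def ind {n : ℕ} (i : Fin (n-1)) : Sym2 (Fin n) → ZMod 2 :=
  fun e => if e = s(lo i, hi i) then 1 else 0

/-- Image of each generator in `Gp n`. -/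
def genGp {n : ℕ} : GGen n → Gp n
  | Sum.inl i => ⟨sPerm i, ind i⟩
  | Sum.inr i => ⟨sPerm i, fun _ => 0⟩

@[simp] lemma genGp_inl {n : ℕ} (i : Fin (n-1)) :
    genGp (n := n) (Sum.inl i) = ⟨sPerm i, ind i⟩ := rfl
@[simp] lemma genGp_inr {n : ℕ} (i : Fin (n-1)) :
    genGp (n := n) (Sum.inr i) = ⟨sPerm i, fun _ => 0⟩ := rfl

lemma sym2_map_perm_eq {n : ℕ} (σ : Equiv.Perm (Fin n)) (e : Sym2 (Fin n)) (x y : Fin n) :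
    e.map σ = s(x, y) ↔ e = s(σ⁻¹ x, σ⁻¹ y) := by
  constructor
  · intro h
    have h2 := congrArg (Sym2.map ⇑σ⁻¹) h
    rwa [Sym2.map_map, Sym2.map_pair_eq,
      show ⇑σ⁻¹ ∘ ⇑σ = id from funext fun z => σ.symm_apply_apply z,
      Sym2.map_id, id_eq] at h2
  · rintro rfl
    rw [Sym2.map_pair_eq, Equiv.Perm.inv_def, Equiv.apply_symm_apply, Equiv.apply_symm_apply]

lemma sPerm_inv {n : ℕ} (i : Fin (n-1)) : (sPerm (n := n) i)⁻¹ = sPerm i :=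
  Equiv.swap_inv _ _

lemma ind_map_self {n : ℕ} (i : Fin (n-1)) (e : Sym2 (Fin n)) :
    ind i (e.map (sPerm i)) = ind i e := by
  have hs : s(hi i, lo i) = s(lo i, hi i) := Sym2.eq_swap
  unfold ind
  simp only [sym2_map_perm_eq, sPerm, Equiv.swap_inv, Equiv.swap_apply_left,
    Equiv.swap_apply_right, hs]

lemma dist_ne {n : ℕ} {i j : Fin (n-1)} (h : 2 ≤ Nat.dist (i : ℕ) (j : ℕ)) :
    lo (n := n) i ≠ lo j ∧ lo (n := n) i ≠ hi j ∧ hi (n := n) i ≠ lo j ∧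
      hi (n := n) i ≠ hi j := by
  unfold Nat.dist at h
  refine ⟨?_, ?_, ?_, ?_⟩ <;>
    (apply Fin.ne_of_val_ne; simp only [lo, hi]; omega)

lemma ind_map_far {n : ℕ} {i j : Fin (n-1)} (h : 2 ≤ Nat.dist (i : ℕ) (j : ℕ))
    (e : Sym2 (Fin n)) : ind j (e.map (sPerm i)) = ind j e := by
  obtain ⟨h1, h2, h3, h4⟩ := dist_ne (n := n) h
  unfold ind
  simp only [sym2_map_perm_eq, sPerm, Equiv.swap_inv,
    Equiv.swap_apply_of_ne_of_ne h1.symm h3.symm,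
    Equiv.swap_apply_of_ne_of_ne h2.symm h4.symm]

lemma sPerm_comm {n : ℕ} {i j : Fin (n-1)} (h : 2 ≤ Nat.dist (i : ℕ) (j : ℕ)) :
    sPerm (n := n) i * sPerm j = sPerm j * sPerm i := by
  obtain ⟨h1, h2, h3, h4⟩ := dist_ne (n := n) h
  have hd : (sPerm (n := n) i).Disjoint (sPerm j) := by
    intro x
    rcases eq_or_ne x (lo j) with rfl | hc
    · left; exact Equiv.swap_apply_of_ne_of_ne h1.symm h3.symm
    rcases eq_or_ne x (hi j) with rfl | hdd
    · left; exact Equiv.swap_apply_of_ne_of_ne h2.symm h4.symm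
    · right; exact Equiv.swap_apply_of_ne_of_ne hc hdd
  exact hd.commute.eq

lemma adj_facts {n : ℕ} {i j : Fin (n-1)} (h : (j : ℕ) = (i : ℕ) + 1) :
    hi (n := n) i = lo j ∧ lo (n := n) i ≠ lo j ∧ lo (n := n) i ≠ hi j ∧
      lo (n := n) j ≠ hi j ∧ hi (n := n) j ≠ hi i := by
  refine ⟨Fin.ext ?_, ?_, ?_, ?_, ?_⟩
  · simp only [lo, hi]; omega
  all_goals (apply Fin.ne_of_val_ne; simp only [lo, hi]; omega)

lemma sPerm_braid {n : ℕ} {i j : Fin (n-1)} (h : (j : ℕ) = (i : ℕ) + 1) :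
    sPerm (n := n) i * sPerm j * sPerm i = sPerm j * sPerm i * sPerm j := by
  obtain ⟨hb, h1, h2, h3, h4⟩ := adj_facts (n := n) h
  unfold sPerm
  rw [hb]
  have hab : lo (n := n) i ≠ lo j := h1
  have hac : lo (n := n) i ≠ hi j := h2
  have hbc : lo (n := n) j ≠ hi j := h3
  have e1 := Equiv.swap_mul_swap_mul_swap (x := hi (n := n) j) (y := lo j) (z := lo i)
    hbc.symm (Ne.symm hac)
  have e2 := Equiv.swap_mul_swap_mul_swap (x := lo (n := n) i) (y := lo j) (z := hi j)
    hab hac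
  rw [Equiv.swap_comm (lo j) (lo i), Equiv.swap_comm (hi j) (lo j)] at e1
  rw [e1, e2]
  exact Equiv.swap_comm _ _

lemma ind_semi {n : ℕ} {i j : Fin (n-1)} (h : (j : ℕ) = (i : ℕ) + 1) (e : Sym2 (Fin n)) :
    ind i (e.map (sPerm j * sPerm i)) = ind j e := by
  obtain ⟨hb, h1, h2, h3, h4⟩ := adj_facts (n := n) h
  have e1 : (sPerm (n := n) i) ((sPerm j) (lo i)) = lo j := by
    rw [sPerm, sPerm, Equiv.swap_apply_of_ne_of_ne h1 h2, ← hb, Equiv.swap_apply_left]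
  have e2 : (sPerm (n := n) i) ((sPerm j) (hi i)) = hi j := by
    rw [sPerm, sPerm, hb, Equiv.swap_apply_left, ← hb,
      Equiv.swap_apply_of_ne_of_ne (Ne.symm h2) h4]
  unfold ind
  simp only [sym2_map_perm_eq]
  simp only [mul_inv_rev, sPerm_inv, Equiv.Perm.mul_apply, e1, e2]

lemma rels_check (n : ℕ) : ∀ r ∈ FRels n, FreeGroup.lift (genGp (n := n)) r = 1 := by
  intro r hr
  simp only [FRels, Set.mem_union, Set.mem_iUnion, Set.mem_singleton_iff,
    Set.mem_insert_iff] at hr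
  rcases hr with ((((⟨i, rfl⟩ | ⟨i, rfl⟩) | ⟨i, rfl⟩) |
      ⟨i, j, hd, (rfl | rfl | rfl)⟩) | ⟨i, j, hadj, (rfl | rfl)⟩)
  · -- zz
    simp only [map_mul, zg, FreeGroup.lift_apply_of, genGp_inl]
    refine Gp.ext ?_ ?_
    · simp [sPerm, Equiv.swap_mul_self]
    · funext e
      simp only [Gp.mul_f, Gp.mk_p, Gp.mk_f, Gp.one_f, ind_map_self]
      unfold ind
      split_ifs <;> decide
  · -- tt
    simp only [map_mul, tg, FreeGroup.lift_apply_of, genGp_inr]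
    refine Gp.ext ?_ ?_
    · simp [sPerm, Equiv.swap_mul_self]
    · funext e
      simp
  · -- virt
    simp only [map_mul, map_inv, zg, tg, FreeGroup.lift_apply_of, genGp_inl, genGp_inr]
    rw [mul_inv_eq_one]
    refine Gp.ext rfl ?_
    funext e
    simp [ind_map_self]
  · -- far zz
    simp only [map_mul, map_inv, zg, FreeGroup.lift_apply_of, genGp_inl]
    rw [mul_inv_eq_one]
    refine Gp.ext ?_ ?_
    · exact (sPerm_comm hd).symm
    · funext e
      have hd' : 2 ≤ Nat.dist (j : ℕ) (i : ℕ) := by rwa [Nat.dist_comm]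
      simp only [Gp.mul_f, Gp.mk_p, Gp.mk_f, ind_map_far hd, ind_map_far hd']
      exact add_comm _ _
  · -- far zt
    simp only [map_mul, map_inv, zg, tg, FreeGroup.lift_apply_of, genGp_inl, genGp_inr]
    rw [mul_inv_eq_one]
    refine Gp.ext ?_ ?_
    · exact (sPerm_comm hd).symm
    · funext e
      have hd' : 2 ≤ Nat.dist (j : ℕ) (i : ℕ) := by rwa [Nat.dist_comm]
      simp [ind_map_far hd']
  · -- far tt
    simp only [map_mul, map_inv, tg, FreeGroup.lift_apply_of, genGp_inr]
    rw [mul_inv_eq_one]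
    refine Gp.ext ?_ ?_
    · exact (sPerm_comm hd).symm
    · funext e
      simp
  · -- r3v
    simp only [map_mul, map_inv, tg, FreeGroup.lift_apply_of, genGp_inr]
    rw [mul_inv_eq_one]
    refine Gp.ext ?_ ?_
    · simp only [Gp.mul_p, Gp.mk_p, ← mul_assoc]
      exact sPerm_braid hadj
    · funext e
      simp
  · -- semi
    simp only [map_mul, map_inv, zg, tg, FreeGroup.lift_apply_of, genGp_inl, genGp_inr]
    rw [mul_inv_eq_one]
    refine Gp.ext ?_ ?_
    · simp only [Gp.mul_p, Gp.mk_p, ← mul_assoc]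
      exact sPerm_braid hadj
    · funext e
      simp only [Gp.mul_f, Gp.mul_p, Gp.mk_p, Gp.mk_f, ind_semi hadj]
      simp

/-- The crossing-parity homomorphism on `F_n`. -/
def FHom (n : ℕ) : FGrp n →* Gp n := PresentedGroup.toGroup (rels_check n)

lemma FHom_evalF {n : ℕ} (w : List (Letter n)) :
    FHom n (evalF w) = ⟨permOf w, crossPar w⟩ := by
  induction w with
  | nil =>
      rw [show evalF ([] : List (Letter n)) = 1 from rfl, map_one]
      refine Gp.ext ?_ ?_
      · simp [permOf]
      · funext e; rfl
  | cons g rest ih =>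
      cases g with
      | zeta i =>
          rw [show evalF (Letter.zeta i :: rest) = zF i * evalF rest from by
            simp [evalF], map_mul, ih,
            show FHom n (zF i) = (⟨sPerm i, ind i⟩ : Gp n) from
              PresentedGroup.toGroup.of (rels_check n)]
          refine Gp.ext ?_ ?_
          · show permOf rest * sPerm i = permOf (Letter.zeta i :: rest)
            simp [permOf, transOf, Letter.idx]
          · funext e
            show ind i e + crossPar rest (e.map (sPerm i))
                = crossPar (Letter.zeta i :: rest) e
            rfl
      | tau i =>
          rw [show evalF (Letter.tau i :: rest) = tF i * evalF rest from by
            simp [evalF], map_mul, ih,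
            show FHom n (tF i) = (⟨sPerm i, fun _ => 0⟩ : Gp n) from
              PresentedGroup.toGroup.of (rels_check n)]
          refine Gp.ext ?_ ?_
          · show permOf rest * sPerm i = permOf (Letter.tau i :: rest)
            simp [permOf, transOf, Letter.idx]
          · funext e
            show (0 : ZMod 2) + crossPar rest (e.map (sPerm i))
                = crossPar (Letter.tau i :: rest) e
            rfl

/-- the map counting, for each word `w` and each unordered pair `{a,b}`
of strands, the parity of the number of classical letters at which strands `a` and `b`
cross, descends to a well-defined function on `F_n` (it sends each `τ_i` to `0` and
each `ζ_i` to the indicator of the pair of strands crossing there). -/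
theorem crossing_parities_descend (n : ℕ) :
    ∃ f : FGrp n → (Sym2 (Fin n) → ZMod 2),
      ∀ w : List (Letter n), f (evalF w) = crossPar w := by
  refine ⟨fun x => (FHom n x).f, fun w => ?_⟩
  show ((FHom n) (evalF w)).f = crossPar w
  rw [FHom_evalF]

end OneTermBracket
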